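/- Assume that for each i ∈ {1, 2}: F_i refines F_{3−i} in every CKC; every F_i-loop is F_{3−i}-covered; and every irreducible F_i-loop with at least 6 states is, as the same sequence of states, an irreducible F_{3−i}-loop. Let C_A be a cluster (the union of all CKCs containing a pair of some loop in a maximal connected family of type-2 irreducible F₁-loops). Then for all ω, ω' ∈ C_A, F₁(ω) = F₁(ω') implies F₂(ω) = F₂(ω') (every F₂-measurable function on C_A is F₁-measurable). -/

import Mathlib

open scoped Classical

namespace Oracles

variable {Ω : Type}

/-- Two states lie in the same common knowledge component (CKC) iff they are related
by the join (finest common coarsening) of the players' information partitions. -/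
def ckcRel {n : ℕ} (Pl : Fin n → Setoid Ω) (ω ω' : Ω) : Prop :=
  (⨆ i, Pl i).r ω ω'

/-- An `F`-loop: a cyclic sequence of `m ≥ 2` pairs of states `(x j, y j)`. -/
structure IsLoop {n : ℕ} (Pl : Fin n → Setoid Ω) (F : Setoid Ω)
    (m : ℕ) (x y : ZMod m → Ω) : Prop where
  two_le : 2 ≤ m
  pair_ne : ∀ j, x j ≠ y j
  pair_ckc : ∀ j, ckcRel Pl (x j) (y j)
  link : ∀ j, F.r (y j) (x (j + 1))
  ckc_ne : ∀ j, ¬ ckcRel Pl (x j) (x (j + 1))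
  link_disjoint : ∀ j k : ZMod m, j ≠ k →
    ({y j, x (j + 1)} : Set Ω) ∩ {y k, x (k + 1)} = ∅

/-- The set of states of a loop. -/
def loopStates {m : ℕ} (x y : ZMod m → Ω) : Set Ω :=
  Set.range x ∪ Set.range y

/-- `F` refines `F'` in every CKC. -/
def RefinesInCKC {n : ℕ} (Pl : Fin n → Setoid Ω) (F F' : Setoid Ω) : Prop :=
  ∀ ω ω', ckcRel Pl ω ω' → F.r ω ω' → F'.r ω ω'

/-- A loop is `F'`-non-informative if both states of each of its pairs lie in the
same block of `F'`. -/
def NonInformative (F' : Setoid Ω) {m : ℕ} (x y : ZMod m → Ω) : Prop :=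
  ∀ j, F'.r (x j) (y j)

/-- A loop is `F'`-fully-informative if the states of each pair lie in different
blocks of `F'`. -/
def FullyInformative (F' : Setoid Ω) {m : ℕ} (x y : ZMod m → Ω) : Prop :=
  ∀ j, ¬ F'.r (x j) (y j)

/-- A loop is `F'`-informative if the states of at least one pair lie in different
blocks of `F'`. -/
def Informative (F' : Setoid Ω) {m : ℕ} (x y : ZMod m → Ω) : Prop :=
  ∃ j, ¬ F'.r (x j) (y j)

/-- A loop is irreducible if no strict subset of its set of states forms an `F`-loop. -/
def IsIrreducible {n : ℕ} (Pl : Fin n → Setoid Ω) (F : Setoid Ω)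
    {m : ℕ} (x y : ZMod m → Ω) : Prop :=
  ¬ ∃ (m' : ℕ) (x' y' : ZMod m' → Ω),
      IsLoop Pl F m' x' y' ∧ loopStates x' y' ⊂ loopStates x y

/-- A loop is type-2 irreducible if no four distinct states of the loop lie in the
same block of `F`. -/
def Type2Irreducible (F : Setoid Ω) {m : ℕ} (x y : ZMod m → Ω) : Prop :=
  ¬ ∃ a b c d : Ω,
      a ∈ loopStates x y ∧ b ∈ loopStates x y ∧ c ∈ loopStates x y ∧
        d ∈ loopStates x y ∧
      a ≠ b ∧ a ≠ c ∧ a ≠ d ∧ b ≠ c ∧ b ≠ d ∧ c ≠ d ∧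
      F.r a b ∧ F.r a c ∧ F.r a d

/-- A loop is `F'`-balanced if for every partition of its set of states into two
disjoint `F'`-measurable sets `A` and `B`, the number of transitions from `A` to `B`
equals the number of transitions from `B` to `A`. -/
def Balanced (F' : Setoid Ω) {m : ℕ} (x y : ZMod m → Ω) : Prop :=
  ∀ A B : Set Ω,
    A ∪ B = loopStates x y → A ∩ B = ∅ →
    (∀ ω ω', ω ∈ loopStates x y → ω' ∈ loopStates x y → F'.r ω ω' →
      (ω ∈ A ↔ ω' ∈ A)) →
    Nat.card {j : ZMod m // x j ∈ A ∧ y j ∈ B} =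
      Nat.card {j : ZMod m // x j ∈ B ∧ y j ∈ A}

/-- A loop is `F'`-covered if its index set can be partitioned into the set
`J = {j : x j ∈ F'(y j)}` together with classes each of which, arranged in a
suitable cyclic order, forms an `F'`-loop. -/
def Covered {n : ℕ} (Pl : Fin n → Setoid Ω) (F' : Setoid Ω)
    {m : ℕ} (x y : ZMod m → Ω) : Prop :=
  ∃ (r : ℕ) (I : Fin r → Set (ZMod m)),
    (Pairwise fun t t' => Disjoint (I t) (I t')) ∧
    (⋃ t, I t) = {j | ¬ F'.r (x j) (y j)} ∧
    ∀ t, ∃ (mt : ℕ) (e : ZMod mt → ZMod m),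
      Function.Injective e ∧ Set.range e = I t ∧
      IsLoop Pl F' mt (x ∘ e) (y ∘ e)


/-- The one-sided equivalence conditions for the ordered pair of partitions
`(F, F')`: refinement in every CKC, every `F`-loop is `F'`-covered, and every
irreducible `F`-loop with at least 6 states is (as the same sequence of states)
an irreducible `F'`-loop. -/
def OneSideConds {n : ℕ} (Pl : Fin n → Setoid Ω) (F F' : Setoid Ω) : Prop :=
  RefinesInCKC Pl F F' ∧
  (∀ (m : ℕ) (x y : ZMod m → Ω), IsLoop Pl F m x y → Covered Pl F' x y) ∧
  ∀ (m : ℕ) (x y : ZMod m → Ω), IsLoop Pl F m x y → IsIrreducible Pl F x y →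
    3 ≤ m → IsLoop Pl F' m x y ∧ IsIrreducible Pl F' x y

/-- A bundled `F`-loop. -/
structure Loop {n : ℕ} (Pl : Fin n → Setoid Ω) (F : Setoid Ω) where
  m : ℕ
  x : ZMod m → Ω
  y : ZMod m → Ω
  isLoop : IsLoop Pl F m x y

/-- Two loops share a CKC if some CKC contains a pair of each of them. -/
def ShareCKC {n : ℕ} {Pl : Fin n → Setoid Ω} {F : Setoid Ω}
    (L L' : Loop Pl F) : Prop :=
  ∃ j j', ckcRel Pl (L.x j) (L'.x j')

/-- A connected family of type-2 irreducible loops: any two of its members are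
joined by a finite chain of members, consecutive ones sharing a CKC. -/
def IsConnectedFamily {n : ℕ} {Pl : Fin n → Setoid Ω} {F : Setoid Ω}
    (𝒜 : Set (Loop Pl F)) : Prop :=
  (∀ L ∈ 𝒜, Type2Irreducible F L.x L.y) ∧
  ∀ L ∈ 𝒜, ∀ L' ∈ 𝒜,
    Relation.ReflTransGen (fun a b => a ∈ 𝒜 ∧ b ∈ 𝒜 ∧ ShareCKC a b) L L'

/-- A maximal (nonempty) connected family of type-2 irreducible loops. -/
def IsMaximalConnectedFamily {n : ℕ} {Pl : Fin n → Setoid Ω} {F : Setoid Ω}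
    (𝒜 : Set (Loop Pl F)) : Prop :=
  𝒜.Nonempty ∧ IsConnectedFamily 𝒜 ∧
    ∀ ℬ : Set (Loop Pl F), IsConnectedFamily ℬ → 𝒜 ⊆ ℬ → ℬ = 𝒜

/-- The union of all CKCs that contain a pair of some loop of the family. -/
def clusterOf {n : ℕ} {Pl : Fin n → Setoid Ω} {F : Setoid Ω}
    (𝒜 : Set (Loop Pl F)) : Set Ω :=
  {ω | ∃ L ∈ 𝒜, ∃ j, ckcRel Pl ω (L.x j)}

/-- A cluster: the union of all CKCs containing a pair of some loop of a maximal
connected family of type-2 irreducible loops. -/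
def IsCluster {n : ℕ} (Pl : Fin n → Setoid Ω) (F : Setoid Ω) (C : Set Ω) : Prop :=
  ∃ 𝒜 : Set (Loop Pl F), IsMaximalConnectedFamily 𝒜 ∧ C = clusterOf 𝒜

/-- `Ω*`: the collection of all clusters together with all CKCs not contained in
any cluster. -/
def OmegaStar {n : ℕ} (Pl : Fin n → Setoid Ω) (F : Setoid Ω) : Set (Set Ω) :=
  {C | IsCluster Pl F C} ∪
    {C | (∃ ω, C = {ω' | ckcRel Pl ω ω'}) ∧ ∀ D, IsCluster Pl F D → ¬ C ⊆ D}


section Auxiliary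

variable {n : ℕ} {Pl : Fin n → Setoid Ω} {F₁ F₂ : Setoid Ω}

lemma ckc_refl (Pl : Fin n → Setoid Ω) (a : Ω) : ckcRel Pl a a := Setoid.refl' _ a

lemma ckc_symm {a b : Ω} (h : ckcRel Pl a b) : ckcRel Pl b a := Setoid.symm' _ h

lemma ckc_trans {a b c : Ω} (h : ckcRel Pl a b) (h' : ckcRel Pl b c) :
    ckcRel Pl a c := Setoid.trans' _ h h'

lemma mem_loopStates_x {m : ℕ} (x y : ZMod m → Ω) (j : ZMod m) :
    x j ∈ loopStates x y := Set.mem_union_left _ ⟨j, rfl⟩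

lemma mem_loopStates_y {m : ℕ} (x y : ZMod m → Ω) (j : ZMod m) :
    y j ∈ loopStates x y := Set.mem_union_right _ ⟨j, rfl⟩

lemma loop_y_ne_xsucc {m : ℕ} {x y : ZMod m → Ω} (hL : IsLoop Pl F₁ m x y) (j : ZMod m) :
    ¬ ckcRel Pl (y j) (x (j + 1)) :=
  fun h => hL.ckc_ne j (ckc_trans (hL.pair_ckc j) h)

lemma loop_link_disj {m : ℕ} {x y : ZMod m → Ω} (hL : IsLoop Pl F₁ m x y) {j k : ZMod m}
    (hjk : j ≠ k) {s : Ω} (h1 : s = y j ∨ s = x (j + 1)) (h2 : s = y k ∨ s = x (k + 1)) :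
    False := by
  have h := hL.link_disjoint j k hjk
  have hs : s ∈ ({y j, x (j + 1)} : Set Ω) ∩ ({y k, x (k + 1)} : Set Ω) := by
    simp only [Set.mem_inter_iff, Set.mem_insert_iff, Set.mem_singleton_iff]
    exact ⟨h1, h2⟩
  rw [h] at hs
  exact hs

/-- In a type-2 irreducible loop, at most one link lies in any given `F₁`-block. -/
lemma badlink_unique {m : ℕ} {x y : ZMod m → Ω} (hL : IsLoop Pl F₁ m x y)
    (h2 : Type2Irreducible F₁ x y) (w : Ω) {j k : ZMod m}
    (hj : F₁.r (y j) w) (hk : F₁.r (y k) w) : j = k := by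
  by_contra hjk
  have hbne : y j ≠ x (j + 1) := fun h => loop_y_ne_xsucc hL j (h ▸ ckc_refl Pl (y j))
  have hdne : y k ≠ x (k + 1) := fun h => loop_y_ne_xsucc hL k (h ▸ ckc_refl Pl (y k))
  have hac : F₁.r (y j) (y k) := F₁.trans' hj (F₁.symm' hk)
  apply h2
  refine ⟨y j, x (j + 1), y k, x (k + 1), mem_loopStates_y x y j, mem_loopStates_x x y (j + 1),
    mem_loopStates_y x y k, mem_loopStates_x x y (k + 1), hbne, ?_, ?_, ?_, ?_, hdne,
    hL.link j, hac, F₁.trans' hac (hL.link k)⟩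
  · exact fun h => loop_link_disj hL hjk (Or.inl rfl) (Or.inl h)
  · exact fun h => loop_link_disj hL hjk (Or.inl rfl) (Or.inr h)
  · exact fun h => loop_link_disj hL hjk (Or.inr rfl) (Or.inl h)
  · exact fun h => loop_link_disj hL hjk (Or.inr rfl) (Or.inr h)

/-- A fully informative 2-loop that is `F₂`-covered has its links in `F₂`. -/
lemma twoLoop_link {m : ℕ} (hm : m = 2) {x y : ZMod m → Ω} (hL : IsLoop Pl F₁ m x y)
    (hcov : Covered Pl F₂ x y) (h21 : RefinesInCKC Pl F₂ F₁)
    (hinf : ∀ j, ¬ F₁.r (x j) (y j)) : F₂.r (y 0) (x 1) := by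
  subst hm
  obtain ⟨r, I, hdisj, hunion, hloops⟩ := hcov
  have h0 : (0 : ZMod 2) ∈ ⋃ t, I t := by
    rw [hunion]
    exact fun h => hinf 0 (h21 _ _ (hL.pair_ckc 0) h)
  obtain ⟨t, ht⟩ := Set.mem_iUnion.mp h0
  obtain ⟨mt, e, einj, erange, hFL⟩ := hloops t
  haveI : NeZero mt := ⟨by have := hFL.two_le; omega⟩
  have hmt : mt = 2 := by
    have hcard := Fintype.card_le_of_injective e einj
    rw [ZMod.card, ZMod.card] at hcard
    have := hFL.two_le
    omega
  subst hmt
  have hne01 : e 0 ≠ e 1 := fun h => absurd (einj h) (by decide)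
  have halt : ∀ u v : ZMod 2, u ≠ v → v = u + 1 := by decide
  have he1 : e 1 = e 0 + 1 := halt _ _ hne01
  have hcases : ∀ u : ZMod 2, u = 0 ∨ u = 1 := by decide
  rcases hcases (e 0) with h0' | h0'
  · have hl := hFL.link 0
    simp only [Function.comp_apply] at hl
    have : (0 + 1 : ZMod 2) = 1 := by decide
    rw [this] at hl
    rw [h0'] at hl
    rw [he1, h0'] at hl
    simpa using hl
  · have hl := hFL.link 1
    simp only [Function.comp_apply] at hl
    have : (1 + 1 : ZMod 2) = 0 := by decide
    rw [this] at hl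
    rw [he1, h0'] at hl
    rwa [this] at hl

/-- Rigidity: a "clean cycle" is irreducible. -/
lemma rigidity {m : ℕ} (hm : 2 ≤ m) {x y : ZMod m → Ω}
    (Hne : ∀ j, x j ≠ y j)
    (H1 : ∀ j, ckcRel Pl (x j) (y j))
    (H2 : ∀ j k, ckcRel Pl (x j) (x k) → j = k)
    (H4 : ∀ j k, F₁.r (y j) (y k) → j = k)
    (H5 : ∀ j k, F₁.r (x j) (x k) → j = k)
    (H6 : ∀ j k, F₁.r (y j) (x k) → k = j + 1) :
    IsIrreducible Pl F₁ x y := by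
  haveI : NeZero m := ⟨by omega⟩
  rintro ⟨m', x', y', hN, hss⟩
  have hclass : ∀ s, s ∈ loopStates x' y' → ∃ j, s = x j ∨ s = y j := by
    intro s hs
    have hmem := hss.1 hs
    simp only [loopStates, Set.mem_union, Set.mem_range] at hmem
    rcases hmem with ⟨j, hj⟩ | ⟨j, hj⟩
    exacts [⟨j, Or.inl hj.symm⟩, ⟨j, Or.inr hj.symm⟩]
  have key : ∀ i : ZMod m', ∃ j, (x' i = x j ∧ y' i = y j) ∨ (x' i = y j ∧ y' i = x j) := by
    intro i
    obtain ⟨j, hj⟩ := hclass (x' i) (mem_loopStates_x x' y' i)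
    obtain ⟨k, hk⟩ := hclass (y' i) (mem_loopStates_y x' y' i)
    have hckc := hN.pair_ckc i
    have hne := hN.pair_ne i
    rcases hj with hj | hj <;> rcases hk with hk | hk
    · exfalso
      rw [hj, hk] at hckc
      exact hne (hj.trans ((H2 j k hckc) ▸ hk.symm))
    · rw [hj, hk] at hckc
      have : j = k := H2 j k (ckc_trans hckc (ckc_symm (H1 k)))
      exact ⟨j, Or.inl ⟨hj, this ▸ hk⟩⟩
    · rw [hj, hk] at hckc
      have : j = k := H2 j k (ckc_trans (H1 j) hckc)
      exact ⟨j, Or.inr ⟨hj, this ▸ hk⟩⟩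
    · exfalso
      rw [hj, hk] at hckc
      have : j = k := H2 j k (ckc_trans (H1 j) (ckc_trans hckc (ckc_symm (H1 k))))
      exact hne (hj.trans (this ▸ hk.symm))
  choose f hf using key
  set Eps : ZMod m' → Prop := fun i => x' i = x (f i) with hEps
  have hcase : ∀ i, (Eps i ∧ x' i = x (f i) ∧ y' i = y (f i)) ∨
      (¬ Eps i ∧ x' i = y (f i) ∧ y' i = x (f i)) := by
    intro i
    rcases hf i with h | h
    · exact Or.inl ⟨h.1, h⟩
    · exact Or.inr ⟨fun he => Hne (f i) (he.symm.trans h.1), h⟩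
  have hfne : ∀ i, f i ≠ f (i + 1) := by
    intro i heq
    apply hN.ckc_ne i
    have c1 : ckcRel Pl (x (f i)) (x' i) := by
      rcases hcase i with ⟨_, h, _⟩ | ⟨_, h, _⟩
      · rw [h]; exact ckc_refl Pl _
      · rw [h]; exact H1 (f i)
    have c2 : ckcRel Pl (x (f (i + 1))) (x' (i + 1)) := by
      rcases hcase (i + 1) with ⟨_, h, _⟩ | ⟨_, h, _⟩
      · rw [h]; exact ckc_refl Pl _
      · rw [h]; exact H1 (f (i + 1))
    exact ckc_trans (ckc_symm c1) (heq ▸ c2)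
  have htrans : ∀ i : ZMod m',
      (Eps i → Eps (i + 1) ∧ f (i + 1) = f i + 1) ∧
      (¬ Eps i → ¬ Eps (i + 1) ∧ f (i + 1) = f i - 1) := by
    intro i
    have hlink := hN.link i
    rcases hcase i with ⟨he, hx, hy⟩ | ⟨he, hx, hy⟩ <;>
      rcases hcase (i + 1) with ⟨he', hx', hy'⟩ | ⟨he', hx', hy'⟩
    · refine ⟨fun _ => ⟨he', ?_⟩, fun h => absurd he h⟩
      rw [hy, hx'] at hlink
      exact (H6 _ _ hlink).symm ▸ rfl
    · exfalso
      rw [hy, hx'] at hlink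
      exact hfne i (H4 _ _ hlink)
    · exfalso
      rw [hy, hx'] at hlink
      exact hfne i (H5 _ _ hlink)
    · refine ⟨fun h => absurd h he, fun _ => ⟨he', ?_⟩⟩
      rw [hy, hx'] at hlink
      have := H6 _ _ (F₁.symm' hlink)
      exact eq_sub_of_add_eq this.symm
  have hsurj : ∀ j : ZMod m, ∃ i : ZMod m', f i = j := by
    by_cases hE0 : Eps 0
    · have step : ∀ t : ℕ, Eps ((t : ZMod m')) ∧ f ((t : ZMod m')) = f 0 + (t : ZMod m) := by
        intro t
        induction t with
        | zero => simpa using hE0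
        | succ t ih =>
          have h := (htrans ((t : ZMod m'))).1 ih.1
          have hcast : (((t + 1 : ℕ)) : ZMod m') = ((t : ZMod m')) + 1 := by push_cast; ring
          refine ⟨by rw [hcast]; exact h.1, ?_⟩
          rw [hcast, h.2, ih.2]
          push_cast
          ring
      intro j
      refine ⟨(((j - f 0).val : ℕ) : ZMod m'), ?_⟩
      rw [(step _).2, ZMod.natCast_rightInverse (j - f 0)]
      ring
    · have step : ∀ t : ℕ, ¬ Eps ((t : ZMod m')) ∧ f ((t : ZMod m')) = f 0 - (t : ZMod m) := by
        intro t
        induction t with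
        | zero => simpa using hE0
        | succ t ih =>
          have h := (htrans ((t : ZMod m'))).2 ih.1
          have hcast : (((t + 1 : ℕ)) : ZMod m') = ((t : ZMod m')) + 1 := by push_cast; ring
          refine ⟨by rw [hcast]; exact h.1, ?_⟩
          rw [hcast, h.2, ih.2]
          push_cast
          ring
      intro j
      refine ⟨(((f 0 - j).val : ℕ) : ZMod m'), ?_⟩
      rw [(step _).2, ZMod.natCast_rightInverse (f 0 - j)]
      ring
  have hsup : loopStates x y ⊆ loopStates x' y' := by
    intro s hs
    simp only [loopStates, Set.mem_union, Set.mem_range] at hs ⊢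
    rcases hs with ⟨j, hj⟩ | ⟨j, hj⟩
    · obtain ⟨i, hi⟩ := hsurj j
      rcases hcase i with ⟨_, hx, _⟩ | ⟨_, _, hy⟩
      · exact Or.inl ⟨i, by rw [hx, hi, hj]⟩
      · exact Or.inr ⟨i, by rw [hy, hi, hj]⟩
    · obtain ⟨i, hi⟩ := hsurj j
      rcases hcase i with ⟨_, _, hy⟩ | ⟨_, hx, _⟩
      · exact Or.inr ⟨i, by rw [hy, hi, hj]⟩
      · exact Or.inl ⟨i, by rw [hx, hi, hj]⟩
  exact hss.2 hsup

end Auxiliary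


section Connectivity

variable {n : ℕ} {Pl : Fin n → Setoid Ω} {F₁ F₂ : Setoid Ω}

/-- One step of movement: either stay within a CKC, or cross between CKCs along an
`F₁`-edge whose block is not the block of `w`. -/
def StepRel (Pl : Fin n → Setoid Ω) (F₁ : Setoid Ω) (w : Ω) (a b : Ω) : Prop :=
  ckcRel Pl a b ∨ (F₁.r a b ∧ ¬ ckcRel Pl a b ∧ ¬ F₁.r a w)

lemma stepRel_symm {w : Ω} : Symmetric (StepRel Pl F₁ w) := by
  rintro a b (h | ⟨h1, h2, h3⟩)
  · exact Or.inl (ckc_symm h)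
  · exact Or.inr ⟨F₁.symm' h1, fun hc => h2 (ckc_symm hc), fun hb => h3 (F₁.trans' h1 hb)⟩

lemma T_symm {w a b : Ω} (h : Relation.ReflTransGen (StepRel Pl F₁ w) a b) :
    Relation.ReflTransGen (StepRel Pl F₁ w) b a :=
  (@Relation.ReflTransGen.stdSymm _ _ ⟨fun _ _ h' => stepRel_symm h'⟩).symm _ _ h

/-- All anchor states of a type-2 irreducible loop are `StepRel`-connected. -/
lemma loop_T {m : ℕ} {x y : ZMod m → Ω} (hL : IsLoop Pl F₁ m x y)
    (h2 : Type2Irreducible F₁ x y) (w : Ω) (j k : ZMod m) :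
    Relation.ReflTransGen (StepRel Pl F₁ w) (x j) (x k) := by
  haveI : NeZero m := ⟨by have := hL.two_le; omega⟩
  have hop : ∀ j : ZMod m, ¬ F₁.r (y j) w →
      Relation.ReflTransGen (StepRel Pl F₁ w) (x j) (x (j + 1)) := by
    intro j hgood
    have s1 : StepRel Pl F₁ w (x j) (y j) := Or.inl (hL.pair_ckc j)
    have s2 : StepRel Pl F₁ w (y j) (x (j + 1)) :=
      Or.inr ⟨hL.link j, loop_y_ne_xsucc hL j, hgood⟩
    exact Relation.ReflTransGen.head s1 (Relation.ReflTransGen.single s2)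
  by_cases hbad : ∃ jb, F₁.r (y jb) w
  · obtain ⟨jb, hjb⟩ := hbad
    have huniq : ∀ i, i ≠ jb → ¬ F₁.r (y i) w :=
      fun i hi hr => hi (badlink_unique hL h2 w hr hjb)
    have fwd : ∀ t : ℕ, t < m →
        Relation.ReflTransGen (StepRel Pl F₁ w) (x (jb + 1)) (x (jb + 1 + (t : ZMod m))) := by
      intro t
      induction t with
      | zero => intro _; simpa using Relation.ReflTransGen.refl
      | succ t ih =>
        intro hlt
        have h1 := ih (by omega)
        have hgood : jb + 1 + (t : ZMod m) ≠ jb := by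
          intro h
          have h' : jb + ((1 : ZMod m) + (t : ZMod m)) = jb + 0 := by
            rw [← add_assoc, h, add_zero]
          have h'' : ((1 + t : ℕ) : ZMod m) = 0 := by push_cast; exact add_left_cancel h'
          have hdvd : m ∣ 1 + t := (ZMod.natCast_eq_zero_iff (1 + t) m).mp h''
          have := Nat.le_of_dvd (by omega) hdvd
          omega
        have hidx : (jb + 1 + (t : ZMod m)) + 1 = jb + 1 + ((t + 1 : ℕ) : ZMod m) := by
          push_cast; ring
        exact h1.trans (hidx ▸ hop _ (huniq _ hgood))
    have reach : ∀ k, Relation.ReflTransGen (StepRel Pl F₁ w) (x (jb + 1)) (x k) := by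
      intro k
      have hval := ZMod.val_lt (k - (jb + 1))
      have h1 := fwd ((k - (jb + 1)).val) hval
      have hidx : jb + 1 + (((k - (jb + 1)).val : ℕ) : ZMod m) = k := by
        rw [ZMod.natCast_rightInverse (k - (jb + 1))]
        ring
      rwa [hidx] at h1
    exact (T_symm (reach j)).trans (reach k)
  · push_neg at hbad
    have fwd : ∀ (j : ZMod m) (t : ℕ),
        Relation.ReflTransGen (StepRel Pl F₁ w) (x j) (x (j + (t : ZMod m))) := by
      intro j t
      induction t with
      | zero => simpa using Relation.ReflTransGen.refl
      | succ t ih =>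
        have hidx : (j + (t : ZMod m)) + 1 = j + ((t + 1 : ℕ) : ZMod m) := by
          push_cast; ring
        exact ih.trans (hidx ▸ hop _ (hbad _))
    have h1 := fwd j ((k - j).val)
    have hidx : j + (((k - j).val : ℕ) : ZMod m) = k := by
      rw [ZMod.natCast_rightInverse (k - j)]; ring
    rwa [hidx] at h1

/-- All anchor states of all loops of a connected family are `StepRel`-connected. -/
lemma family_T {𝒜 : Set (Loop Pl F₁)} (hfam : IsConnectedFamily 𝒜) (w : Ω)
    {L L' : Loop Pl F₁} (hL : L ∈ 𝒜) (hL' : L' ∈ 𝒜) (j : ZMod L.m) (j' : ZMod L'.m) :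
    Relation.ReflTransGen (StepRel Pl F₁ w) (L.x j) (L'.x j') := by
  have hchain := hfam.2 L hL L' hL'
  clear hL'
  revert j'
  induction hchain with
  | refl => exact fun j' => loop_T L.isLoop (hfam.1 L hL) w j j'
  | @tail M M' hab hbc ih =>
    intro j'
    obtain ⟨hM, hM', jm, jm', hsh⟩ := hbc
    exact ((ih jm).trans (Relation.ReflTransGen.single (Or.inl hsh))).trans
      (loop_T M'.isLoop (hfam.1 M' hM') w jm' j')

/-- A walk of cross-CKC `F₁`-edges (all avoiding the block of `w`) from the CKC of
`s0` to the CKC of `s`. -/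
structure PreWalk (Pl : Fin n → Setoid Ω) (F₁ : Setoid Ω) (w s0 s : Ω)
    (k : ℕ) (a b : ℕ → Ω) : Prop where
  edge_rel : ∀ i, i < k → F₁.r (a i) (b i)
  edge_cross : ∀ i, i < k → ¬ ckcRel Pl (a i) (b i)
  edge_block : ∀ i, i < k → ¬ F₁.r (a i) w
  chain : ∀ i, i + 1 < k → ckcRel Pl (b i) (a (i + 1))
  start : 0 < k → ckcRel Pl s0 (a 0)
  fin0 : k = 0 → ckcRel Pl s0 s
  finPos : 0 < k → ckcRel Pl (b (k - 1)) s

lemma walk_of_T {w s0 s : Ω} (h : Relation.ReflTransGen (StepRel Pl F₁ w) s0 s) :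
    ∃ k a b, PreWalk Pl F₁ w s0 s k a b := by
  induction h with
  | refl =>
    exact ⟨0, fun _ => s0, fun _ => s0,
      { edge_rel := fun i hi => absurd hi (Nat.not_lt_zero i),
        edge_cross := fun i hi => absurd hi (Nat.not_lt_zero i),
        edge_block := fun i hi => absurd hi (Nat.not_lt_zero i),
        chain := fun i hi => absurd hi (by omega),
        start := fun hk => absurd hk (by omega),
        fin0 := fun _ => ckc_refl Pl s0,
        finPos := fun hk => absurd hk (by omega) }⟩
  | @tail sb sc hab hbc ih =>
    obtain ⟨k, a, b, W⟩ := ih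
    rcases hbc with hckc | ⟨h1, h2, h3⟩
    · exact ⟨k, a, b,
        { edge_rel := W.edge_rel, edge_cross := W.edge_cross, edge_block := W.edge_block,
          chain := W.chain, start := W.start,
          fin0 := fun hk => ckc_trans (W.fin0 hk) hckc,
          finPos := fun hk => ckc_trans (W.finPos hk) hckc }⟩
    · refine ⟨k + 1, fun i => if i = k then sb else a i, fun i => if i = k then sc else b i, ?_⟩
      constructor
      · intro i hi
        by_cases h : i = k
        · subst h; simp [h1]
        · simp only [if_neg h]; exact W.edge_rel i (by omega)
      · intro i hi
        by_cases h : i = k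
        · subst h; simp [h2]
        · simp only [if_neg h]; exact W.edge_cross i (by omega)
      · intro i hi
        by_cases h : i = k
        · subst h; simp [h3]
        · simp only [if_neg h]; exact W.edge_block i (by omega)
      · intro i hi
        by_cases h : i + 1 = k
        · have hik : i ≠ k := by omega
          simp only [if_neg hik, if_pos h]
          have := W.finPos (by omega)
          have hidx : k - 1 = i := by omega
          rw [hidx] at this
          exact this
        · have hik : i ≠ k := by omega
          simp only [if_neg hik, if_neg h]
          exact W.chain i (by omega)
      · intro _
        by_cases h : k = 0
        · subst h; simpa using W.fin0 rfl
        · rw [show ((if 0 = k then sb else a 0) = a 0) from if_neg (by omega)]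
          exact W.start (by omega)
      · intro hk; omega
      · intro _
        simp only [Nat.add_sub_cancel, if_pos rfl]
        exact ckc_refl Pl sc

end Connectivity


section MainCross

variable {n : ℕ} {Pl : Fin n → Setoid Ω} {F₁ F₂ : Setoid Ω}

lemma main_cross (h12 : OneSideConds Pl F₁ F₂) (h21 : OneSideConds Pl F₂ F₁)
    {w w' : Ω} (hF : F₁.r w w') (hnc : ¬ ckcRel Pl w w')
    (hT : Relation.ReflTransGen (StepRel Pl F₁ w) w' w) : F₂.r w w' := by
  classical
  have hex : ∃ k, ∃ a b, PreWalk Pl F₁ w w' w k a b := by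
    obtain ⟨k, a, b, W⟩ := walk_of_T hT
    exact ⟨k, a, b, W⟩
  set k₀ := Nat.find hex with hk₀def
  obtain ⟨a, b, W⟩ := Nat.find_spec hex
  have hk₀ : 0 < k₀ := by
    rcases Nat.eq_zero_or_pos k₀ with h | h
    · exact absurd (ckc_symm (W.fin0 h)) hnc
    · exact h
  -- vertex distinctness from the start CKC
  have D2 : ∀ i, i < k₀ → ¬ ckcRel Pl w' (b i) := by
    intro i hi hcon
    by_cases hlast : i = k₀ - 1
    · subst hlast
      exact hnc (ckc_symm (ckc_trans hcon (W.finPos hk₀)))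
    · apply Nat.find_min hex (show k₀ - (i + 1) < k₀ by omega)
      refine ⟨fun t => a (t + (i + 1)), fun t => b (t + (i + 1)), ?_⟩
      constructor
      · intro t ht; exact W.edge_rel _ (by omega)
      · intro t ht; exact W.edge_cross _ (by omega)
      · intro t ht; exact W.edge_block _ (by omega)
      · intro t ht
        have hidx : t + 1 + (i + 1) = (t + (i + 1)) + 1 := by omega
        rw [hidx]
        exact W.chain _ (by omega)
      · intro ht
        have h0 : (0 : ℕ) + (i + 1) = i + 1 := by omega
        rw [h0]
        exact ckc_trans hcon (W.chain i (by omega))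
      · exact fun ht => absurd ht (by omega)
      · intro ht
        have hidx : (k₀ - (i + 1)) - 1 + (i + 1) = k₀ - 1 := by omega
        rw [hidx]
        exact W.finPos hk₀
  -- pairwise vertex distinctness
  have D1 : ∀ i j, i < j → j < k₀ → ¬ ckcRel Pl (b i) (b j) := by
    intro i j hij hj hcon
    apply Nat.find_min hex (show k₀ - (j - i) < k₀ by omega)
    refine ⟨fun t => if t ≤ i then a t else a (t + (j - i)),
            fun t => if t ≤ i then b t else b (t + (j - i)), ?_⟩
    constructor
    · intro t ht
      by_cases h : t ≤ i
      · simp only [if_pos h]; exact W.edge_rel t (by omega)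
      · simp only [if_neg h]; exact W.edge_rel _ (by omega)
    · intro t ht
      by_cases h : t ≤ i
      · simp only [if_pos h]; exact W.edge_cross t (by omega)
      · simp only [if_neg h]; exact W.edge_cross _ (by omega)
    · intro t ht
      by_cases h : t ≤ i
      · simp only [if_pos h]; exact W.edge_block t (by omega)
      · simp only [if_neg h]; exact W.edge_block _ (by omega)
    · intro t ht
      by_cases h1 : t + 1 ≤ i
      · simp only [if_pos (by omega : t ≤ i), if_pos h1]
        exact W.chain t (by omega)
      · by_cases h2 : t = i
        · subst h2
          simp only [if_pos (le_refl t), if_neg h1]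
          have hidx : t + 1 + (j - t) = j + 1 := by omega
          rw [hidx]
          exact ckc_trans hcon (W.chain j (by omega))
        · simp only [if_neg (by omega : ¬ t ≤ i), if_neg h1]
          have hidx : t + 1 + (j - i) = (t + (j - i)) + 1 := by omega
          rw [hidx]
          exact W.chain _ (by omega)
    · intro ht
      simp only [if_pos (by omega : (0 : ℕ) ≤ i)]
      exact W.start hk₀
    · exact fun ht => absurd ht (by omega)
    · intro ht
      by_cases h : k₀ - (j - i) - 1 ≤ i
      · simp only [if_pos h]
        have hji : j = k₀ - 1 := by omega
        have hii : k₀ - (j - i) - 1 = i := by omega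
        rw [hii]
        have hfp := W.finPos hk₀
        rw [← hji] at hfp
        exact ckc_trans hcon hfp
      · simp only [if_neg h]
        have hidx : k₀ - (j - i) - 1 + (j - i) = k₀ - 1 := by omega
        rw [hidx]
        exact W.finPos hk₀
  -- pairwise block distinctness
  have D3 : ∀ i j, i < j → j < k₀ → ¬ F₁.r (a i) (a j) := by
    intro i j hij hj hcon
    apply Nat.find_min hex (show k₀ - (j - i) < k₀ by omega)
    refine ⟨fun t => if t ≤ i then a t else a (t + (j - i)),
            fun t => if t < i then b t else b (t + (j - i)), ?_⟩
    constructor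
    · intro t ht
      by_cases h : t < i
      · simp only [if_pos (by omega : t ≤ i), if_pos h]
        exact W.edge_rel t (by omega)
      · by_cases h2 : t = i
        · subst h2
          simp only [if_pos (le_refl t), if_neg h]
          have hidx : t + (j - t) = j := by omega
          rw [hidx]
          exact F₁.trans' hcon (W.edge_rel j hj)
        · simp only [if_neg (by omega : ¬ t ≤ i), if_neg h]
          exact W.edge_rel _ (by omega)
    · intro t ht
      by_cases h : t < i
      · simp only [if_pos (by omega : t ≤ i), if_pos h]
        exact W.edge_cross t (by omega)
      · by_cases h2 : t = i
        · subst h2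
          simp only [if_pos (le_refl t), if_neg h]
          have hidx : t + (j - t) = j := by omega
          rw [hidx]
          intro hcc
          by_cases hi0 : t = 0
          · subst hi0
            exact D2 j hj (ckc_trans (W.start hk₀) hcc)
          · have hch := W.chain (t - 1) (by omega)
            have ht1 : t - 1 + 1 = t := by omega
            rw [ht1] at hch
            exact D1 (t - 1) j (by omega) hj (ckc_trans hch hcc)
        · simp only [if_neg (by omega : ¬ t ≤ i), if_neg h]
          exact W.edge_cross _ (by omega)
    · intro t ht
      by_cases h : t ≤ i
      · simp only [if_pos h]; exact W.edge_block t (by omega)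
      · simp only [if_neg h]; exact W.edge_block _ (by omega)
    · intro t ht
      by_cases h1 : t + 1 ≤ i
      · simp only [if_pos (by omega : t < i), if_pos h1]
        exact W.chain t (by omega)
      · by_cases h2 : t = i
        · subst h2
          simp only [if_neg (lt_irrefl t), if_neg h1]
          have hidx1 : t + (j - t) = j := by omega
          have hidx2 : t + 1 + (j - t) = j + 1 := by omega
          rw [hidx1, hidx2]
          exact W.chain j (by omega)
        · by_cases h3 : t < i
          · -- then t + 1 = i impossible? t < i and ¬(t+1 ≤ i) gives contradiction
            exact absurd h3 (by omega)
          · simp only [if_neg h3, if_neg h1]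
            have hidx : t + 1 + (j - i) = (t + (j - i)) + 1 := by omega
            rw [hidx]
            exact W.chain _ (by omega)
    · intro ht
      simp only [if_pos (by omega : (0 : ℕ) ≤ i)]
      exact W.start hk₀
    · exact fun ht => absurd ht (by omega)
    · intro ht
      have hnl : ¬ (k₀ - (j - i) - 1 < i) := by omega
      simp only [if_neg hnl]
      have hidx : k₀ - (j - i) - 1 + (j - i) = k₀ - 1 := by omega
      rw [hidx]
      exact W.finPos hk₀
  -- build the clean loop
  haveI hFact : Fact (1 < k₀ + 1) := ⟨by omega⟩
  haveI : Nontrivial (ZMod (k₀ + 1)) := ZMod.nontrivial _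
  set x : ZMod (k₀ + 1) → Ω := fun j =>
    if j.val = 0 then b (k₀ - 1) else if j.val = 1 then w' else b (j.val - 2) with hxdef
  set y : ZMod (k₀ + 1) → Ω := fun j => if j.val = 0 then w else a (j.val - 1) with hydef
  have hvlt : ∀ j : ZMod (k₀ + 1), j.val < k₀ + 1 := fun j => ZMod.val_lt j
  have hvinj : ∀ j k : ZMod (k₀ + 1), j.val = k.val → j = k :=
    fun j k h => ZMod.val_injective (k₀ + 1) h
  have hsucc : ∀ j : ZMod (k₀ + 1), (j + 1).val = if j.val = k₀ then 0 else j.val + 1 := by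
    intro j
    rw [ZMod.val_add, ZMod.val_one]
    by_cases h : j.val = k₀
    · rw [if_pos h, h, Nat.mod_self]
    · rw [if_neg h]
      exact Nat.mod_eq_of_lt (by have := hvlt j; omega)
  have hx0 : ∀ j : ZMod (k₀ + 1), j.val = 0 → x j = b (k₀ - 1) := by
    intro j h; simp only [hxdef]; rw [if_pos h]
  have hx1 : ∀ j : ZMod (k₀ + 1), j.val = 1 → x j = w' := by
    intro j h; simp only [hxdef]; rw [if_neg (by omega), if_pos h]
  have hxp : ∀ j : ZMod (k₀ + 1), 2 ≤ j.val → x j = b (j.val - 2) := by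
    intro j h; simp only [hxdef]; rw [if_neg (by omega), if_neg (by omega)]
  have hy0 : ∀ j : ZMod (k₀ + 1), j.val = 0 → y j = w := by
    intro j h; simp only [hydef]; rw [if_pos h]
  have hyp : ∀ j : ZMod (k₀ + 1), j.val ≠ 0 → y j = a (j.val - 1) := by
    intro j h; simp only [hydef]; rw [if_neg h]
  -- the links
  have hlink : ∀ j : ZMod (k₀ + 1), F₁.r (y j) (x (j + 1)) := by
    intro j
    by_cases h0 : j.val = 0
    · have h1 : (j + 1).val = 1 := by rw [hsucc j, if_neg (by omega), h0]
      rw [hy0 j h0, hx1 _ h1]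
      exact hF
    · have hxj : x (j + 1) = b (j.val - 1) := by
        by_cases hk : j.val = k₀
        · have h1 : (j + 1).val = 0 := by rw [hsucc j, if_pos hk]
          rw [hx0 _ h1, hk]
        · have h1 : (j + 1).val = j.val + 1 := by rw [hsucc j, if_neg hk]
          rw [hxp _ (by omega)]
          congr 1
          omega
      rw [hyp j h0, hxj]
      exact W.edge_rel (j.val - 1) (by have := hvlt j; omega)
  -- label (block) distinctness
  have hLab : ∀ j k : ZMod (k₀ + 1), F₁.r (y j) (y k) → j = k := by
    intro j k hr
    by_cases hj0 : j.val = 0 <;> by_cases hk0 : k.val = 0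
    · exact hvinj _ _ (hj0.trans hk0.symm)
    · exfalso
      rw [hy0 j hj0, hyp k hk0] at hr
      exact W.edge_block (k.val - 1) (by have := hvlt k; omega) (F₁.symm' hr)
    · exfalso
      rw [hyp j hj0, hy0 k hk0] at hr
      exact W.edge_block (j.val - 1) (by have := hvlt j; omega) hr
    · rw [hyp j hj0, hyp k hk0] at hr
      rcases Nat.lt_trichotomy (j.val - 1) (k.val - 1) with h | h | h
      · exact absurd hr (D3 _ _ h (by have := hvlt k; omega))
      · exact hvinj _ _ (by omega)
      · exact absurd (F₁.symm' hr) (D3 _ _ h (by have := hvlt j; omega))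
  -- pairs lie in CKCs
  have hpc : ∀ j : ZMod (k₀ + 1), ckcRel Pl (x j) (y j) := by
    intro j
    by_cases h0 : j.val = 0
    · rw [hx0 j h0, hy0 j h0]
      exact W.finPos hk₀
    · by_cases h1 : j.val = 1
      · rw [hx1 j h1, hyp j h0]
        have hi : j.val - 1 = 0 := by omega
        rw [hi]
        exact W.start hk₀
      · rw [hxp j (by omega), hyp j h0]
        have hc := W.chain (j.val - 2) (by have := hvlt j; omega)
        have hi : j.val - 2 + 1 = j.val - 1 := by omega
        rw [hi] at hc
        exact hc
  -- CKCs pairwise distinct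
  have hckcX : ∀ j k : ZMod (k₀ + 1), ckcRel Pl (x j) (x k) → j = k := by
    have key : ∀ j k : ZMod (k₀ + 1), j.val < k.val → ¬ ckcRel Pl (x j) (x k) := by
      intro j k hlt hcc
      by_cases hj0 : j.val = 0
      · rw [hx0 j hj0] at hcc
        by_cases hk1 : k.val = 1
        · rw [hx1 k hk1] at hcc
          exact D2 (k₀ - 1) (by omega) (ckc_symm hcc)
        · rw [hxp k (by omega)] at hcc
          exact D1 (k.val - 2) (k₀ - 1) (by have := hvlt k; omega) (by omega) (ckc_symm hcc)
      · by_cases hj1 : j.val = 1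
        · rw [hx1 j hj1] at hcc
          rw [hxp k (by omega)] at hcc
          exact D2 (k.val - 2) (by have := hvlt k; omega) hcc
        · rw [hxp j (by omega), hxp k (by omega)] at hcc
          exact D1 (j.val - 2) (k.val - 2) (by omega) (by have := hvlt k; omega) hcc
    intro j k hcc
    rcases Nat.lt_trichotomy j.val k.val with h | h | h
    · exact absurd hcc (key j k h)
    · exact hvinj _ _ h
    · exact absurd (ckc_symm hcc) (key k j h)
  -- pairs are informative
  have hxyF : ∀ j : ZMod (k₀ + 1), ¬ F₁.r (x j) (y j) := by
    intro j hr
    have hl := hlink (j - 1)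
    rw [show j - 1 + 1 = j by ring] at hl
    have heq := hLab (j - 1) j (F₁.trans' hl hr)
    have h1 : (1 : ZMod (k₀ + 1)) = 0 := by linear_combination -heq
    exact one_ne_zero h1
  have hpne : ∀ j : ZMod (k₀ + 1), x j ≠ y j :=
    fun j h => hxyF j (h ▸ F₁.refl' (x j))
  have hckc_ne : ∀ j : ZMod (k₀ + 1), ¬ ckcRel Pl (x j) (x (j + 1)) := by
    intro j h
    have heq := hckcX _ _ h
    have h1 : (1 : ZMod (k₀ + 1)) = 0 := by linear_combination -heq
    exact one_ne_zero h1
  have hdisj : ∀ j k : ZMod (k₀ + 1), j ≠ k →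
      ({y j, x (j + 1)} : Set Ω) ∩ {y k, x (k + 1)} = ∅ := by
    intro j k hjk
    rw [Set.eq_empty_iff_forall_notMem]
    intro s hs
    simp only [Set.mem_inter_iff, Set.mem_insert_iff, Set.mem_singleton_iff] at hs
    have hrel : ∀ (u : ZMod (k₀ + 1)) (t : Ω), t = y u ∨ t = x (u + 1) → F₁.r (y u) t := by
      rintro u t (rfl | rfl)
      · exact F₁.refl' _
      · exact hlink u
    exact hjk (hLab j k (F₁.trans' (hrel j s hs.1) (F₁.symm' (hrel k s hs.2))))
  have hLoop : IsLoop Pl F₁ (k₀ + 1) x y :=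
    { two_le := by omega
      pair_ne := hpne
      pair_ckc := hpc
      link := hlink
      ckc_ne := hckc_ne
      link_disjoint := hdisj }
  have hH5 : ∀ j k : ZMod (k₀ + 1), F₁.r (x j) (x k) → j = k := by
    intro j k hr
    have hlj := hlink (j - 1)
    have hlk := hlink (k - 1)
    rw [show j - 1 + 1 = j by ring] at hlj
    rw [show k - 1 + 1 = k by ring] at hlk
    have heq := hLab (j - 1) (k - 1) (F₁.trans' (F₁.trans' hlj hr) (F₁.symm' hlk))
    linear_combination heq
  have hH6 : ∀ j k : ZMod (k₀ + 1), F₁.r (y j) (x k) → k = j + 1 := by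
    intro j k hr
    have hlk := hlink (k - 1)
    rw [show k - 1 + 1 = k by ring] at hlk
    have heq := hLab j (k - 1) (F₁.trans' hr (F₁.symm' hlk))
    linear_combination -heq
  have hirr : IsIrreducible Pl F₁ x y :=
    rigidity (by omega) hpne hpc hckcX hLab hH5 hH6
  have hy0' : y 0 = w := hy0 0 (by rw [ZMod.val_zero])
  have hx1' : x 1 = w' := hx1 1 (ZMod.val_one _)
  by_cases hk1 : k₀ = 1
  · have hcov := h12.2.1 _ x y hLoop
    have hres := twoLoop_link (by omega) hLoop hcov h21.1 hxyF
    rw [hy0', hx1'] at hres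
    exact hres
  · obtain ⟨hF2loop, -⟩ := h12.2.2 (k₀ + 1) x y hLoop hirr (by omega)
    have hl := hF2loop.link 0
    rw [zero_add, hy0', hx1'] at hl
    exact hl

end MainCross

/-- **Observation (measurability over clusters).**
Under the two-sided equivalence conditions, if `C_A` is a cluster (the union of
all CKCs containing a pair of some loop in a maximal connected family of type-2
irreducible `F₁`-loops), then for all `ω, ω' ∈ C_A`, `F₁(ω) = F₁(ω')` implies
`F₂(ω) = F₂(ω')`. -/
theorem cluster_measurability
    {Ω : Type} [Fintype Ω] [Nonempty Ω] {n : ℕ} (hn : 2 ≤ n)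
    (Pl : Fin n → Setoid Ω) (F₁ F₂ : Setoid Ω)
    (h12 : OneSideConds Pl F₁ F₂) (h21 : OneSideConds Pl F₂ F₁)
    (𝒜 : Set (Loop Pl F₁)) (hmax : IsMaximalConnectedFamily 𝒜) :
    ∀ ω ∈ clusterOf 𝒜, ∀ ω' ∈ clusterOf 𝒜,
      F₁.r ω ω' → F₂.r ω ω' := by
  intro ω hω ω' hω' hF
  by_cases hckc : ckcRel Pl ω ω'
  · exact h12.1 ω ω' hckc hF
  · obtain ⟨L, hL, j0, hj0⟩ := hω
    obtain ⟨L', hL', j0', hj0'⟩ := hω'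
    have hfam := hmax.2.1
    have t2 := family_T hfam ω hL hL' j0 j0'
    have s1 : StepRel Pl F₁ ω ω' (L'.x j0') := Or.inl hj0'
    have s2 : StepRel Pl F₁ ω ω (L.x j0) := Or.inl hj0
    have hT : Relation.ReflTransGen (StepRel Pl F₁ ω) ω' ω :=
      (Relation.ReflTransGen.single s1).trans
        ((T_symm t2).trans (T_symm (Relation.ReflTransGen.single s2)))
    exact main_cross h12 h21 hF hckc hT

end Oracles
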